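/- Suppose A > 0, q > 0, I_γ ⊆ I_C, and that there exists a positive integer η such that for every sequence {c_m}_{m=1}^∞ with c_m ∈ I_β for all m, there exist positive integers N1 ≤ N2 ≤ η with Σ_{m=N1}^{N2} c_m ∈ I_B. Suppose further that there exists a positive integer η2 such that for every sequence {d_m}_{m=1}^∞ with d_m ∈ I_ε for all m, there exist positive integers N3 ≤ N4 ≤ η2 with Σ_{m=N3}^{N4} d_m ∈ I_E. Then there exist M > 0 and N ∈ ℕ such that x_n ≤ M and y_n ≤ M for all n > N. -/

import Mathlib

open Finset

/-- The index set of the coefficient function `f` on `{1, …, k}`: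
the set of indices `i ∈ {1, …, k}` with `f i > 0`. -/
noncomputable def indexSet (k : ℕ) (f : ℕ → ℝ) : Finset ℕ :=
  (Finset.Icc 1 k).filter fun i => 0 < f i

/-- The iteration condition: for every sequence `c` (indexed by `1, 2, …`)
taking values in `S`, there exist positive integers `N1 ≤ N2 ≤ η` such that
`∑_{m=N1}^{N2} c m ∈ T`. -/
def iterCond (η : ℕ) (S T : Finset ℕ) : Prop :=
  ∀ c : ℕ → ℕ, (∀ m, 1 ≤ m → c m ∈ S) →
    ∃ N1 N2 : ℕ, 0 < N1 ∧ N1 ≤ N2 ∧ N2 ≤ η ∧ (∑ m ∈ Finset.Icc N1 N2, c m) ∈ T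

namespace Stmt11

lemma mem_indexSet {k : ℕ} {f : ℕ → ℝ} {i : ℕ} :
    i ∈ indexSet k f ↔ (1 ≤ i ∧ i ≤ k) ∧ 0 < f i := by
  simp [indexSet, Finset.mem_Icc]

def pS (c : ℕ → ℕ) (t : ℕ) : ℕ := ∑ m ∈ Finset.Icc 1 t, c m

lemma pS_zero (c : ℕ → ℕ) : pS c 0 = 0 := by simp [pS]

lemma pS_succ (c : ℕ → ℕ) (t : ℕ) : pS c (t + 1) = pS c t + c (t + 1) := by
  unfold pS; rw [Finset.sum_Icc_succ_top (by omega)]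

lemma pS_congr {c c' : ℕ → ℕ} {t : ℕ} (h : ∀ m, 1 ≤ m → m ≤ t → c m = c' m) :
    pS c t = pS c' t :=
  Finset.sum_congr rfl fun m hm => by rw [Finset.mem_Icc] at hm; exact h m hm.1 hm.2

lemma pS_le {c : ℕ → ℕ} {t k : ℕ} (h : ∀ m, 1 ≤ m → m ≤ t → c m ≤ k) :
    pS c t ≤ k * t := by
  calc pS c t ≤ ∑ _m ∈ Finset.Icc 1 t, k :=
        Finset.sum_le_sum fun m hm => by rw [Finset.mem_Icc] at hm; exact h m hm.1 hm.2
    _ = k * t := by simp [Nat.card_Icc, Nat.mul_comm]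

lemma pS_split {c : ℕ → ℕ} {N1 t : ℕ} (h1 : 1 ≤ N1) (h2 : N1 ≤ t + 1) :
    pS c (t + 1) = pS c (N1 - 1) + ∑ m ∈ Finset.Icc N1 (t + 1), c m := by
  have e1 : Finset.Icc 1 (t + 1) = Finset.Ioc 0 (t + 1) := by
    rw [← Finset.Icc_add_one_left_eq_Ioc]; rfl
  have e2 : Finset.Icc 1 (N1 - 1) = Finset.Ioc 0 (N1 - 1) := by
    rw [← Finset.Icc_add_one_left_eq_Ioc]; rfl
  have e3 : Finset.Icc N1 (t + 1) = Finset.Ioc (N1 - 1) (t + 1) := by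
    have h : N1 = N1 - 1 + 1 := by omega
    rw [h, Finset.Icc_add_one_left_eq_Ioc]; congr 1
  unfold pS
  rw [e1, e2, e3, Finset.sum_Ioc_consecutive _ (by omega) (by omega)]

noncomputable def Tp (φ den u : ℕ → ℝ) (c : ℕ → ℕ) (t n : ℕ) : ℝ :=
  u (n - pS c t) * ∏ j ∈ Finset.Icc 1 t, (φ (c j) / den (n - pS c (j - 1)))

lemma Tp_zero (φ den u : ℕ → ℝ) (c : ℕ → ℕ) (n : ℕ) : Tp φ den u c 0 n = u n := by
  simp [Tp, pS_zero]

noncomputable def Cseq (x y : ℝ) : ℕ → ℝ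
  | 0 => 0
  | r + 1 => x + y * Cseq x y r

lemma Cseq_nonneg {x y : ℝ} (hx : 0 ≤ x) (hy : 0 ≤ y) : ∀ r, 0 ≤ Cseq x y r
  | 0 => le_refl 0
  | r + 1 => by
      have := Cseq_nonneg hx hy r
      simp only [Cseq]; positivity

lemma prod_le_pow {s : Finset ℕ} {f : ℕ → ℝ} {ρ1 : ℝ} (h1 : 1 ≤ ρ1)
    (h : ∀ j ∈ s, 0 ≤ f j ∧ f j ≤ ρ1) {η : ℕ} (hcard : s.card ≤ η) :
    ∏ j ∈ s, f j ≤ ρ1 ^ η := by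
  calc ∏ j ∈ s, f j ≤ ∏ _j ∈ s, ρ1 :=
        Finset.prod_le_prod (fun j hj => (h j hj).1) (fun j hj => (h j hj).2)
    _ = ρ1 ^ s.card := by rw [Finset.prod_const]
    _ ≤ ρ1 ^ η := pow_le_pow_right₀ h1 hcard


lemma core (k η N0 : ℕ)
    (a A' ρ1 Kst : ℝ) (ha : 0 ≤ a) (hA' : 0 < A') (hρ1 : 1 ≤ ρ1) (hKst : 0 ≤ Kst)
    (φ Φ : ℕ → ℝ) (hφ : ∀ i, 0 ≤ φ i)
    (u den : ℕ → ℝ) (hu : ∀ n, 0 ≤ u n)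
    (hden : ∀ n, N0 ≤ n → A' ≤ den n)
    (hfac : ∀ i, i ∈ Finset.Icc 1 k → ∀ m, N0 ≤ m → φ i / den m ≤ ρ1)
    (hstop : ∀ w, w ∈ indexSet k Φ → ∀ i, i ∈ Finset.Icc 1 k → ∀ m, N0 ≤ m →
        φ i * u (m - w) / den m ≤ Kst)
    (hrec : ∀ n, N0 ≤ n → u n ≤ a + (∑ i ∈ Finset.Icc 1 k, φ i * u (n - i)) / den n)
    (hiter : iterCond η (indexSet k φ) (indexSet k Φ))
    (hne : (indexSet k φ).Nonempty) :
    ∀ r t, t + r = η → ∀ c : ℕ → ℕ,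
      (∀ m, 1 ≤ m → m ≤ t → c m ∈ indexSet k φ) →
      (∀ N1 N2, 0 < N1 → N1 ≤ N2 → N2 ≤ t → (∑ m ∈ Finset.Icc N1 N2, c m) ∉ indexSet k Φ) →
      ∀ n, N0 + k * η ≤ n →
        Tp φ den u c t n ≤ Cseq (a * ρ1 ^ η + k * (Kst * ρ1 ^ η)) k r := by
  intro r
  induction r with
  | zero =>
    intro t ht c hval hwin n hn
    exfalso
    obtain ⟨i0, hi0⟩ := hne
    obtain ⟨N1, N2, h1, h12, h2η, hmem⟩ := hiter
      (fun m => if 1 ≤ m ∧ m ≤ t then c m else i0)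
      (by
        intro m hm
        split_ifs with h
        · exact hval m h.1 h.2
        · exact hi0)
    have heq : (∑ m ∈ Finset.Icc N1 N2, (if 1 ≤ m ∧ m ≤ t then c m else i0)) =
        ∑ m ∈ Finset.Icc N1 N2, c m := by
      refine Finset.sum_congr rfl fun m hm => ?_
      rw [Finset.mem_Icc] at hm
      rw [if_pos ⟨by omega, by omega⟩]
    exact hwin N1 N2 h1 h12 (by omega) (heq ▸ hmem)
  | succ r' ih =>
    intro t ht c hval hwin n hn
    have hcle : ∀ m, 1 ≤ m → m ≤ t → c m ≤ k := fun m h1 h2 =>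
      ((mem_indexSet.1 (hval m h1 h2)).1).2
    have hpSle : ∀ j, j ≤ t → pS c j ≤ k * η := by
      intro j hj
      calc pS c j ≤ k * j := pS_le (fun m h1 h2 => hcle m h1 (by omega))
        _ ≤ k * η := Nat.mul_le_mul_left _ (by omega)
    set idx := n - pS c t with hidx
    have hidxN0 : N0 ≤ idx := by have := hpSle t le_rfl; omega
    set Pd := ∏ j ∈ Finset.Icc 1 t, (φ (c j) / den (n - pS c (j - 1))) with hPd
    have hfacs : ∀ j ∈ Finset.Icc 1 t, 0 ≤ φ (c j) / den (n - pS c (j - 1)) ∧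
        φ (c j) / den (n - pS c (j - 1)) ≤ ρ1 := by
      intro j hj
      rw [Finset.mem_Icc] at hj
      have hjN0 : N0 ≤ n - pS c (j - 1) := by have := hpSle (j - 1) (by omega); omega
      constructor
      · exact div_nonneg (hφ _) (le_trans hA'.le (hden _ hjN0))
      · exact hfac (c j) (Finset.mem_Icc.2 ((mem_indexSet.1 (hval j hj.1 hj.2)).1)) _ hjN0
    have hPd0 : 0 ≤ Pd := Finset.prod_nonneg fun j hj => (hfacs j hj).1
    have hPdρ : Pd ≤ ρ1 ^ η := prod_le_pow hρ1 hfacs (by rw [Nat.card_Icc]; omega)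
    have hCnn : 0 ≤ Cseq (a * ρ1 ^ η + k * (Kst * ρ1 ^ η)) k r' :=
      Cseq_nonneg (by positivity) (by positivity) r'
    have hρη : (0:ℝ) ≤ ρ1 ^ η := by positivity
    have key : ∀ i ∈ Finset.Icc 1 k,
        φ i * u (idx - i) / den idx * Pd ≤
          Cseq (a * ρ1 ^ η + k * (Kst * ρ1 ^ η)) k r' + Kst * ρ1 ^ η := by
      intro i hik
      by_cases hφi : φ i ≤ 0
      · have hz : φ i = 0 := le_antisymm hφi (hφ i)
        rw [hz]
        simp only [zero_mul, zero_div]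
        have : (0:ℝ) ≤ Kst * ρ1 ^ η := by positivity
        linarith
      · push_neg at hφi
        have hiI : i ∈ indexSet k φ := mem_indexSet.2 ⟨Finset.mem_Icc.1 hik, hφi⟩
        set c' := Function.update c (t + 1) i with hc'
        have hc'eq : ∀ m, m ≤ t → c' m = c m := fun m hm =>
          Function.update_of_ne (by omega) _ _
        have hc'top : c' (t + 1) = i := Function.update_self _ _ _
        have hc'val : ∀ m, 1 ≤ m → m ≤ t + 1 → c' m ∈ indexSet k φ := by
          intro m h1 h2
          rcases Nat.lt_or_ge m (t + 1) with h | h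
          · rw [hc'eq m (by omega)]; exact hval m h1 (by omega)
          · have hm : m = t + 1 := by omega
            rw [hm, hc'top]; exact hiI
        have hpSc' : ∀ j, j ≤ t → pS c' j = pS c j :=
          fun j hj => (pS_congr (fun m h1 h2 => (hc'eq m (by omega)).symm)).symm
        have hpSc't1 : pS c' (t + 1) = pS c t + i := by
          rw [pS_succ, hc'top, hpSc' t le_rfl]
        have e1 : u (n - pS c' (t + 1)) = u (idx - i) := by
          rw [hpSc't1, hidx]; congr 1; omega
        have hTpeq : Tp φ den u c' (t + 1) n = φ i * u (idx - i) / den idx * Pd := by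
          unfold Tp
          rw [Finset.prod_Icc_succ_top (by omega : 1 ≤ t + 1)]
          have e0 : t + 1 - 1 = t := by omega
          have e2 : (∏ j ∈ Finset.Icc 1 t, (φ (c' j) / den (n - pS c' (j - 1)))) = Pd := by
            rw [hPd]
            refine Finset.prod_congr rfl fun j hj => ?_
            rw [Finset.mem_Icc] at hj
            rw [hc'eq j hj.2, hpSc' (j - 1) (by omega)]
          rw [e0, e1, e2, hc'top, hpSc' t le_rfl, ← hidx]
          ring
        by_cases hwl : ∀ N1 N2, 0 < N1 → N1 ≤ N2 → N2 ≤ t + 1 →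
            (∑ m ∈ Finset.Icc N1 N2, c' m) ∉ indexSet k Φ
        · have hIH := ih (t + 1) (by omega) c' hc'val hwl n hn
          rw [hTpeq] at hIH
          have : (0:ℝ) ≤ Kst * ρ1 ^ η := by positivity
          linarith
        · push_neg at hwl
          obtain ⟨N1, N2, hN1, hN12, hN2t, hmem⟩ := hwl
          have hN2 : N2 = t + 1 := by
            by_contra hne2
            have hN2t' : N2 ≤ t := by omega
            have heq2 : (∑ m ∈ Finset.Icc N1 N2, c' m) = ∑ m ∈ Finset.Icc N1 N2, c m := by
              refine Finset.sum_congr rfl fun m hm => ?_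
              rw [Finset.mem_Icc] at hm
              exact hc'eq m (by omega)
            exact hwin N1 N2 hN1 hN12 hN2t' (heq2 ▸ hmem)
          subst hN2
          set w := ∑ m ∈ Finset.Icc N1 (t + 1), c' m with hw
          have hsplit : pS c' (t + 1) = pS c' (N1 - 1) + w := pS_split hN1 hN12
          set mN1 := n - pS c' (N1 - 1) with hmN1def
          have hpSc'le : ∀ j, j ≤ t + 1 → pS c' j ≤ k * η := by
            intro j hj
            calc pS c' j ≤ k * j := pS_le (fun m h1 h2 =>
                  ((mem_indexSet.1 (hc'val m h1 (by omega))).1).2)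
              _ ≤ k * η := Nat.mul_le_mul_left _ (by omega)
          have hmN1N0 : N0 ≤ mN1 := by
            have := hpSc'le (N1 - 1) (by omega); omega
          have hidx' : mN1 - w = idx - i := by
            have h1 : n - pS c' (t + 1) = idx - i := by rw [hpSc't1, hidx]; omega
            rw [← h1, hmN1def, hsplit]; omega
          have hN1mem : N1 ∈ Finset.Icc 1 (t + 1) := Finset.mem_Icc.2 ⟨hN1, hN12⟩
          have hprodsplit := Finset.mul_prod_erase (Finset.Icc 1 (t + 1))
            (fun j => φ (c' j) / den (n - pS c' (j - 1))) hN1mem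
          have hfacs' : ∀ j ∈ (Finset.Icc 1 (t + 1)).erase N1,
              0 ≤ φ (c' j) / den (n - pS c' (j - 1)) ∧
              φ (c' j) / den (n - pS c' (j - 1)) ≤ ρ1 := by
            intro j hj
            have hj' := Finset.mem_of_mem_erase hj
            rw [Finset.mem_Icc] at hj'
            have hjN0 : N0 ≤ n - pS c' (j - 1) := by
              have := hpSc'le (j - 1) (by omega); omega
            exact ⟨div_nonneg (hφ _) (le_trans hA'.le (hden _ hjN0)),
              hfac (c' j) (Finset.mem_Icc.2 ((mem_indexSet.1 (hc'val j hj'.1 hj'.2)).1)) _ hjN0⟩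
          have hprodle : (∏ j ∈ (Finset.Icc 1 (t + 1)).erase N1,
              (φ (c' j) / den (n - pS c' (j - 1)))) ≤ ρ1 ^ η :=
            prod_le_pow hρ1 hfacs' (by
              rw [Finset.card_erase_of_mem hN1mem, Nat.card_Icc]; omega)
          have hprodnn : 0 ≤ ∏ j ∈ (Finset.Icc 1 (t + 1)).erase N1,
              (φ (c' j) / den (n - pS c' (j - 1))) :=
            Finset.prod_nonneg fun j hj => (hfacs' j hj).1
          have hstopped : φ (c' N1) * u (mN1 - w) / den mN1 ≤ Kst :=
            hstop w hmem (c' N1)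
              (Finset.mem_Icc.2 ((mem_indexSet.1 (hc'val N1 hN1 hN12)).1)) mN1 hmN1N0
          rw [hidx'] at hstopped
          have hstopnn : 0 ≤ φ (c' N1) * u (idx - i) / den mN1 := by
            have hdpos : (0:ℝ) < den mN1 := lt_of_lt_of_le hA' (hden _ hmN1N0)
            have := hφ (c' N1)
            have := hu (idx - i)
            positivity
          have hTple : Tp φ den u c' (t + 1) n ≤ Kst * ρ1 ^ η := by
            calc Tp φ den u c' (t + 1) n
                = (φ (c' N1) * u (idx - i) / den mN1) *
                  ∏ j ∈ (Finset.Icc 1 (t + 1)).erase N1,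
                    (φ (c' j) / den (n - pS c' (j - 1))) := by
                  unfold Tp
                  rw [← hprodsplit, e1]
                  rw [← hmN1def]
                  ring
              _ ≤ Kst * ρ1 ^ η := mul_le_mul hstopped hprodle hprodnn hKst
          rw [hTpeq] at hTple
          linarith
    have hTp : Tp φ den u c t n = u idx * Pd := by
      unfold Tp
      rw [← hidx, ← hPd]
    have hrecidx := hrec idx hidxN0
    have hchain : Tp φ den u c t n ≤ a * Pd +
        ∑ i ∈ Finset.Icc 1 k, φ i * u (idx - i) / den idx * Pd := by
      rw [hTp]
      calc u idx * Pd
          ≤ (a + (∑ i ∈ Finset.Icc 1 k, φ i * u (idx - i)) / den idx) * Pd :=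
            mul_le_mul_of_nonneg_right hrecidx hPd0
        _ = a * Pd + (∑ i ∈ Finset.Icc 1 k, φ i * u (idx - i)) / den idx * Pd := by ring
        _ = a * Pd + ∑ i ∈ Finset.Icc 1 k, φ i * u (idx - i) / den idx * Pd := by
            rw [Finset.sum_div, Finset.sum_mul]
    have hsumle : ∑ i ∈ Finset.Icc 1 k, φ i * u (idx - i) / den idx * Pd ≤
        (k:ℝ) * (Cseq (a * ρ1 ^ η + k * (Kst * ρ1 ^ η)) k r' + Kst * ρ1 ^ η) := by
      calc ∑ i ∈ Finset.Icc 1 k, φ i * u (idx - i) / den idx * Pd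
          ≤ ∑ _i ∈ Finset.Icc 1 k,
              (Cseq (a * ρ1 ^ η + k * (Kst * ρ1 ^ η)) k r' + Kst * ρ1 ^ η) :=
            Finset.sum_le_sum key
        _ = (k:ℝ) * (Cseq (a * ρ1 ^ η + k * (Kst * ρ1 ^ η)) k r' + Kst * ρ1 ^ η) := by
            rw [Finset.sum_const, Nat.card_Icc, nsmul_eq_mul]
            norm_num
    have haPd : a * Pd ≤ a * ρ1 ^ η := mul_le_mul_of_nonneg_left hPdρ ha
    simp only [Cseq]
    linarith


lemma scalar_bound (k η N0 : ℕ) (hN0k : k ≤ N0)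
    (a A' : ℝ) (ha : 0 ≤ a) (hA' : 0 < A')
    (φ Φ : ℕ → ℝ) (hφ : ∀ i, 0 ≤ φ i)
    (u den : ℕ → ℝ) (hu : ∀ n, 0 ≤ u n)
    (hden : ∀ n, N0 ≤ n → A' ≤ den n)
    (hden2 : ∀ n, N0 ≤ n → ∀ j, j ∈ Finset.Icc 1 k → Φ j * u (n - j) ≤ den n)
    (hrec : ∀ n, N0 ≤ n → u n ≤ a + (∑ i ∈ Finset.Icc 1 k, φ i * u (n - i)) / den n)
    (hiter : iterCond η (indexSet k φ) (indexSet k Φ)) :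
    ∃ M : ℝ, 0 < M ∧ ∀ n, N0 + k * η ≤ n → u n ≤ M := by
  rcases Finset.eq_empty_or_nonempty (indexSet k φ) with hemp | hne
  · refine ⟨a + 1, by linarith, fun n hn => ?_⟩
    have hN0n : N0 ≤ n := by omega
    have hz : (∑ i ∈ Finset.Icc 1 k, φ i * u (n - i)) = 0 := by
      refine Finset.sum_eq_zero fun i hi => ?_
      have h1 : ¬ 0 < φ i := fun hpos =>
        (Finset.notMem_empty i) (hemp ▸ mem_indexSet.2 ⟨Finset.mem_Icc.1 hi, hpos⟩)
      have h2 : φ i = 0 := le_antisymm (not_lt.1 h1) (hφ i)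
      rw [h2, zero_mul]
    have hh := hrec n hN0n
    rw [hz, zero_div] at hh
    linarith
  · set φsum := ∑ i ∈ Finset.Icc 1 k, φ i with hφsum
    have hφsum0 : 0 ≤ φsum := Finset.sum_nonneg fun i _ => hφ i
    set ρ1 := 1 + φsum / A' with hρ1def
    have hρ1 : 1 ≤ ρ1 := by
      rw [hρ1def]
      have : 0 ≤ φsum / A' := div_nonneg hφsum0 hA'.le
      linarith
    set Binv := ∑ w ∈ indexSet k Φ, (Φ w)⁻¹ with hBinvdef
    have hΦpos : ∀ w ∈ indexSet k Φ, 0 < Φ w := fun w hw => (mem_indexSet.1 hw).2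
    have hBinv0 : 0 ≤ Binv :=
      Finset.sum_nonneg fun w hw => inv_nonneg.2 (hΦpos w hw).le
    set Kst := φsum * Binv with hKstdef
    have hKst : 0 ≤ Kst := mul_nonneg hφsum0 hBinv0
    have hfac : ∀ i, i ∈ Finset.Icc 1 k → ∀ m, N0 ≤ m → φ i / den m ≤ ρ1 := by
      intro i hi m hm
      have h1 : φ i / den m ≤ φ i / A' := by
        gcongr
        exacts [hφ i, hden m hm]
      have h2 : φ i ≤ φsum := Finset.single_le_sum (fun j _ => hφ j) hi
      have h3 : φ i / A' ≤ φsum / A' := by gcongr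
      linarith
    have hstop : ∀ w, w ∈ indexSet k Φ → ∀ i, i ∈ Finset.Icc 1 k → ∀ m, N0 ≤ m →
        φ i * u (m - w) / den m ≤ Kst := by
      intro w hw i hi m hm
      have hΦw : 0 < Φ w := hΦpos w hw
      have hwIcc : w ∈ Finset.Icc 1 k := Finset.mem_Icc.2 (mem_indexSet.1 hw).1
      have hd := hden2 m hm w hwIcc
      have hdpos : 0 < den m := lt_of_lt_of_le hA' (hden m hm)
      have h1 : u (m - w) / den m ≤ (Φ w)⁻¹ := by
        rw [div_le_iff₀ hdpos]
        have h2 := mul_le_mul_of_nonneg_left hd (inv_nonneg.2 hΦw.le)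
        rwa [inv_mul_cancel_left₀ hΦw.ne'] at h2
      have h2 : φ i ≤ φsum := Finset.single_le_sum (fun j _ => hφ j) hi
      have h3 : (Φ w)⁻¹ ≤ Binv :=
        Finset.single_le_sum (fun v hv => inv_nonneg.2 (hΦpos v hv).le) hw
      calc φ i * u (m - w) / den m = φ i * (u (m - w) / den m) := by
            rw [mul_div_assoc]
        _ ≤ φsum * Binv :=
            mul_le_mul h2 (h1.trans h3) (div_nonneg (hu _) hdpos.le) hφsum0
        _ = Kst := rfl
    have hCnn : 0 ≤ Cseq (a * ρ1 ^ η + k * (Kst * ρ1 ^ η)) k η :=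
      Cseq_nonneg (by positivity) (by positivity) η
    refine ⟨Cseq (a * ρ1 ^ η + k * (Kst * ρ1 ^ η)) k η + 1, by linarith, fun n hn => ?_⟩
    have hc := core k η N0 a A' ρ1 Kst ha hA' hρ1 hKst φ Φ hφ u den hu hden hfac hstop
      hrec hiter hne η 0 (by omega) (fun _ => 0)
      (by intro m h1 h2; exact absurd h2 (by omega))
      (by intro N1 N2 h1 h2 h3; exact absurd h3 (by omega))
      n hn
    rw [Tp_zero] at hc
    linarith

end Stmt11

theorem stmt_11
    (k : ℕ) (hk : 0 < k)
    (α A p q : ℝ) (β γ B C δ ε D E : ℕ → ℝ)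
    (hα : 0 ≤ α) (hA : 0 ≤ A) (hp : 0 ≤ p) (hq : 0 ≤ q)
    (hβ : ∀ i, 0 ≤ β i) (hγ : ∀ i, 0 ≤ γ i) (hB : ∀ j, 0 ≤ B j) (hC : ∀ j, 0 ≤ C j)
    (hδ : ∀ i, 0 ≤ δ i) (hε : ∀ i, 0 ≤ ε i) (hD : ∀ j, 0 ≤ D j) (hE : ∀ j, 0 ≤ E j)
    (x y : ℕ → ℝ)
    (hxnn : ∀ n, 0 ≤ x n) (hynn : ∀ n, 0 ≤ y n)
    (hxden : ∀ n, k ≤ n →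
      0 < A + ∑ j ∈ Icc 1 k, B j * x (n - j) + ∑ j ∈ Icc 1 k, C j * y (n - j))
    (hyden : ∀ n, k ≤ n →
      0 < q + ∑ j ∈ Icc 1 k, D j * x (n - j) + ∑ j ∈ Icc 1 k, E j * y (n - j))
    (hxrec : ∀ n, k ≤ n → x n =
      (α + ∑ i ∈ Icc 1 k, β i * x (n - i) + ∑ i ∈ Icc 1 k, γ i * y (n - i)) /
      (A + ∑ j ∈ Icc 1 k, B j * x (n - j) + ∑ j ∈ Icc 1 k, C j * y (n - j)))
    (hyrec : ∀ n, k ≤ n → y n =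
      (p + ∑ i ∈ Icc 1 k, δ i * x (n - i) + ∑ i ∈ Icc 1 k, ε i * y (n - i)) /
      (q + ∑ j ∈ Icc 1 k, D j * x (n - j) + ∑ j ∈ Icc 1 k, E j * y (n - j)))
    (hApos : 0 < A) (hqpos : 0 < q)
    (hsub : indexSet k γ ⊆ indexSet k C)
    (hη : ∃ η : ℕ, 0 < η ∧ iterCond η (indexSet k β) (indexSet k B))
    (hη2 : ∃ η2 : ℕ, 0 < η2 ∧ iterCond η2 (indexSet k ε) (indexSet k E)) :
    ∃ M : ℝ, 0 < M ∧ ∃ N : ℕ, ∀ n, N < n → x n ≤ M ∧ y n ≤ M := by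
  obtain ⟨η, hηpos, hiterB⟩ := hη
  obtain ⟨η2, hη2pos, hiterE⟩ := hη2
  have hsB : ∀ n : ℕ, (0:ℝ) ≤ ∑ j ∈ Icc 1 k, B j * x (n - j) :=
    fun n => Finset.sum_nonneg fun j _ => mul_nonneg (hB j) (hxnn _)
  have hsC : ∀ n : ℕ, (0:ℝ) ≤ ∑ j ∈ Icc 1 k, C j * y (n - j) :=
    fun n => Finset.sum_nonneg fun j _ => mul_nonneg (hC j) (hynn _)
  have hsD : ∀ n : ℕ, (0:ℝ) ≤ ∑ j ∈ Icc 1 k, D j * x (n - j) :=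
    fun n => Finset.sum_nonneg fun j _ => mul_nonneg (hD j) (hxnn _)
  have hsE : ∀ n : ℕ, (0:ℝ) ≤ ∑ j ∈ Icc 1 k, E j * y (n - j) :=
    fun n => Finset.sum_nonneg fun j _ => mul_nonneg (hE j) (hynn _)
  -- bound for x
  obtain ⟨Mx, hMx0, hMx⟩ :=
    Stmt11.scalar_bound k η k le_rfl
      (α / A + ∑ i ∈ indexSet k γ, γ i / C i) A
      (add_nonneg (div_nonneg hα hA)
        (Finset.sum_nonneg fun i hi =>
          div_nonneg (hγ i) ((Stmt11.mem_indexSet.1 (hsub hi)).2).le))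
      hApos β B hβ x
      (fun n => A + ∑ j ∈ Icc 1 k, B j * x (n - j) + ∑ j ∈ Icc 1 k, C j * y (n - j))
      hxnn
      (fun n _ => by have := hsB n; have := hsC n; linarith)
      (by
        intro n _ j hj
        have h1 : B j * x (n - j) ≤ ∑ j' ∈ Icc 1 k, B j' * x (n - j') :=
          Finset.single_le_sum (fun j' _ => mul_nonneg (hB j') (hxnn _)) hj
        have := hsC n
        linarith)
      (by
        intro n hn
        rw [hxrec n hn]
        have hdpos := hxden n hn
        rw [add_div, add_div]
        have hα' : α / (A + ∑ j ∈ Icc 1 k, B j * x (n - j) +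
            ∑ j ∈ Icc 1 k, C j * y (n - j)) ≤ α / A := by
          gcongr
          have := hsB n; have := hsC n; linarith
        have hsubIcc : indexSet k γ ⊆ Icc 1 k := Finset.filter_subset _ _
        have hzero : ∀ i ∈ Icc 1 k, i ∉ indexSet k γ → γ i * y (n - i) = 0 := by
          intro i hi hni
          have hz : γ i = 0 := by
            by_contra h
            exact hni (Stmt11.mem_indexSet.2 ⟨Finset.mem_Icc.1 hi,
              lt_of_le_of_ne (hγ i) (Ne.symm h)⟩)
          rw [hz, zero_mul]
        have hsumeq : (∑ i ∈ Icc 1 k, γ i * y (n - i)) =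
            ∑ i ∈ indexSet k γ, γ i * y (n - i) :=
          (Finset.sum_subset hsubIcc hzero).symm
        have hγ' : (∑ i ∈ Icc 1 k, γ i * y (n - i)) /
            (A + ∑ j ∈ Icc 1 k, B j * x (n - j) + ∑ j ∈ Icc 1 k, C j * y (n - j)) ≤
            ∑ i ∈ indexSet k γ, γ i / C i := by
          rw [hsumeq, Finset.sum_div]
          refine Finset.sum_le_sum fun i hi => ?_
          have hCi : 0 < C i := (Stmt11.mem_indexSet.1 (hsub hi)).2
          have hiIcc : i ∈ Icc 1 k := hsubIcc hi
          have hCy : C i * y (n - i) ≤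
              A + ∑ j ∈ Icc 1 k, B j * x (n - j) + ∑ j ∈ Icc 1 k, C j * y (n - j) := by
            have h1 : C i * y (n - i) ≤ ∑ j ∈ Icc 1 k, C j * y (n - j) :=
              Finset.single_le_sum (fun j _ => mul_nonneg (hC j) (hynn _)) hiIcc
            have := hsB n
            linarith
          rw [div_le_div_iff₀ hdpos hCi]
          calc γ i * y (n - i) * C i = γ i * (C i * y (n - i)) := by ring
            _ ≤ γ i * (A + ∑ j ∈ Icc 1 k, B j * x (n - j) +
                ∑ j ∈ Icc 1 k, C j * y (n - j)) :=
              mul_le_mul_of_nonneg_left hCy (hγ i)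
        linarith)
      hiterB
  -- bound for y
  obtain ⟨My, hMy0, hMy⟩ :=
    Stmt11.scalar_bound k η2 (k + k * η + k) (by omega)
      (p / q + ∑ i ∈ Icc 1 k, δ i * Mx / q) q
      (add_nonneg (div_nonneg hp hq)
        (Finset.sum_nonneg fun i _ =>
          div_nonneg (mul_nonneg (hδ i) hMx0.le) hq))
      hqpos ε E hε y
      (fun n => q + ∑ j ∈ Icc 1 k, D j * x (n - j) + ∑ j ∈ Icc 1 k, E j * y (n - j))
      hynn
      (fun n _ => by have := hsD n; have := hsE n; linarith)
      (by
        intro n _ j hj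
        have h1 : E j * y (n - j) ≤ ∑ j' ∈ Icc 1 k, E j' * y (n - j') :=
          Finset.single_le_sum (fun j' _ => mul_nonneg (hE j') (hynn _)) hj
        have := hsD n
        linarith)
      (by
        intro n hn
        rw [hyrec n (by omega)]
        have hdpos := hyden n (by omega)
        rw [add_div, add_div]
        have hp' : p / (q + ∑ j ∈ Icc 1 k, D j * x (n - j) +
            ∑ j ∈ Icc 1 k, E j * y (n - j)) ≤ p / q := by
          gcongr
          have := hsD n; have := hsE n; linarith
        have hδ' : (∑ i ∈ Icc 1 k, δ i * x (n - i)) /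
            (q + ∑ j ∈ Icc 1 k, D j * x (n - j) + ∑ j ∈ Icc 1 k, E j * y (n - j)) ≤
            ∑ i ∈ Icc 1 k, δ i * Mx / q := by
          rw [Finset.sum_div]
          refine Finset.sum_le_sum fun i hi => ?_
          rw [Finset.mem_Icc] at hi
          have hx' : x (n - i) ≤ Mx := hMx (n - i) (by omega)
          have h1 : δ i * x (n - i) ≤ δ i * Mx := mul_le_mul_of_nonneg_left hx' (hδ i)
          refine div_le_div₀ (mul_nonneg (hδ i) hMx0.le) h1 hqpos ?_
          have := hsD n; have := hsE n; linarith
        linarith)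
      hiterE
  refine ⟨Mx + My, by linarith, k + k * η + k + k * η2, fun n hn => ?_⟩
  constructor
  · have := hMx n (by omega); linarith
  · have := hMy n (by omega); linarith
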